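/- There is a bijection between NCCP(n;312), the set of 312-avoiding noncommutative crossing partitions of [n], and NCP(n), the set of non-crossing canonical partitions of [n]. -/

import Mathlib

/-- A noncommutative crossing partition of `[n] = {1,...,n}`: a sequence of blocks such that
every integer in `[n]` appears exactly once, each block is nonempty and strictly increasing,
and `max(π_i) > min(π_{i+1})` for consecutive blocks. -/
def IsNCCP (n : ℕ) (π : List (List ℕ)) : Prop :=
  π.flatten.Perm (List.range' 1 n) ∧
  (∀ b ∈ π, b ≠ [] ∧ b.Pairwise (· < ·)) ∧
  π.Chain' (fun b b' => ∃ x ∈ b, ∃ y ∈ b', y < x)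

/-- Non-crossing: there are no `a < b < c < d` with `a, c` in one block and `b, d`
in a different block. -/
def IsNonCrossing (π : List (List ℕ)) : Prop :=
  ∀ a b c d : ℕ, a < b → b < c → c < d →
    ∀ i j : ℕ, i < π.length → j < π.length → i ≠ j →
      ¬(a ∈ π.getD i [] ∧ c ∈ π.getD i [] ∧ b ∈ π.getD j [] ∧ d ∈ π.getD j [])

/-- Canonical: the minima of the blocks strictly decrease from left to right, i.e.
`min(π_{i+1}) < min(π_i)` for consecutive blocks. -/
def IsCanonicalPart (π : List (List ℕ)) : Prop :=
  π.Chain' (fun b b' => ∃ y ∈ b', ∀ x ∈ b, y < x)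

/-- A word avoids the pattern 312: no positions `i < j < k` with `w_j < w_k < w_i`. -/
def Avoids312 (w : List ℕ) : Prop :=
  ¬ ∃ i j k : ℕ, i < j ∧ j < k ∧ k < w.length ∧
      w.getD j 0 < w.getD k 0 ∧ w.getD k 0 < w.getD i 0

namespace NCCPAux

open List

/-- Occurrence of the pattern 132 as a sublist. -/
def Has132 (w : List ℕ) : Prop := ∃ x y z : ℕ, [x, y, z] <+ w ∧ x < z ∧ z < y

/-- Occurrence of the pattern 312 as a sublist. -/
def Has312 (w : List ℕ) : Prop := ∃ x y z : ℕ, [x, y, z] <+ w ∧ y < z ∧ z < x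

/-- complementation `x ↦ n + 1 - x`. -/
def cmpl (n : ℕ) (w : List ℕ) : List ℕ := w.map (fun x => n + 1 - x)

/-- Add an element at the front of a run decomposition. -/
def consRun (x : ℕ) : List (List ℕ) → List (List ℕ)
  | (y :: r) :: rs => if x < y then (x :: y :: r) :: rs else [x] :: (y :: r) :: rs
  | _ => [[x]]

/-- Decomposition of a word into maximal strictly increasing runs. -/
def runDecomp : List ℕ → List (List ℕ)
  | [] => []
  | x :: xs => consRun x (runDecomp xs)

/- ### generic sublist index lemmas -/

lemma getD_cons_sublist {w : List ℕ} {i : ℕ} (hi : i < w.length) :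
    w.getD i 0 :: w.drop (i + 1) <+ w := by
  conv_rhs => rw [← take_append_drop i w]
  rw [drop_eq_getElem_cons hi, getD_eq_getElem _ _ hi]
  exact sublist_append_right _ _

lemma getD_drop_eq (w : List ℕ) (i m : ℕ) :
    (w.drop i).getD m 0 = w.getD (i + m) 0 := by
  simp [List.getD_eq_getElem?_getD, List.getElem?_drop]

lemma sub_of_idx2 {w : List ℕ} {i j : ℕ} (hij : i < j) (hj : j < w.length) :
    [w.getD i 0, w.getD j 0] <+ w := by
  have hi : i < w.length := lt_trans hij hj
  refine Sublist.trans ?_ (getD_cons_sublist hi)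
  refine Sublist.cons₂ _ (singleton_sublist.mpr ?_)
  have hlen : j - (i + 1) < (w.drop (i + 1)).length := by
    simp only [length_drop]; omega
  have he : (w.drop (i + 1)).getD (j - (i + 1)) 0 = w.getD j 0 := by
    rw [getD_drop_eq]
    congr 1
    omega
  rw [← he, getD_eq_getElem _ _ hlen]
  exact getElem_mem _

lemma sub_of_idx3 {w : List ℕ} {i j k : ℕ} (hij : i < j) (hjk : j < k) (hk : k < w.length) :
    [w.getD i 0, w.getD j 0, w.getD k 0] <+ w := by
  have hi : i < w.length := by omega
  refine Sublist.trans ?_ (getD_cons_sublist hi)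
  refine Sublist.cons₂ _ ?_
  have hlen : k - (i + 1) < (w.drop (i + 1)).length := by
    simp only [length_drop]; omega
  have h2 := sub_of_idx2 (w := w.drop (i + 1)) (i := j - (i + 1)) (j := k - (i + 1))
    (by omega) hlen
  have e1 : (w.drop (i + 1)).getD (j - (i + 1)) 0 = w.getD j 0 := by
    rw [getD_drop_eq]
    congr 1
    omega
  have e2 : (w.drop (i + 1)).getD (k - (i + 1)) 0 = w.getD k 0 := by
    rw [getD_drop_eq]
    congr 1
    omega
  rw [e1, e2] at h2
  exact h2

lemma idx_of_sub1 {w : List ℕ} {x : ℕ} (h : x ∈ w) :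
    ∃ i, i < w.length ∧ w.getD i 0 = x := by
  obtain ⟨n, hn, he⟩ := getElem_of_mem h
  exact ⟨n, hn, by rw [getD_eq_getElem _ _ hn, he]⟩

lemma idx_of_sub2 {w : List ℕ} {x y : ℕ} (h : [x, y] <+ w) :
    ∃ i j, i < j ∧ j < w.length ∧ w.getD i 0 = x ∧ w.getD j 0 = y := by
  induction w with
  | nil => simp at h
  | cons a w' ih =>
    rcases sublist_cons_iff.mp h with h' | ⟨r, hr, hr'⟩
    · obtain ⟨i, j, h1, h2, h3, h4⟩ := ih h'
      exact ⟨i + 1, j + 1, by omega, by simpa using h2, by simpa using h3, by simpa using h4⟩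
    · obtain ⟨rfl, rfl⟩ : a = x ∧ r = [y] := by
        constructor <;> [skip; skip] <;> injection hr with h1 h2 <;> simp [h1, h2]
      obtain ⟨j, hj, hje⟩ := idx_of_sub1 (singleton_sublist.mp hr')
      exact ⟨0, j + 1, by omega, by simpa using hj, rfl, by simpa using hje⟩

lemma idx_of_sub3 {w : List ℕ} {x y z : ℕ} (h : [x, y, z] <+ w) :
    ∃ i j k, i < j ∧ j < k ∧ k < w.length ∧
      w.getD i 0 = x ∧ w.getD j 0 = y ∧ w.getD k 0 = z := by
  induction w with
  | nil => simp at h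
  | cons a w' ih =>
    rcases sublist_cons_iff.mp h with h' | ⟨r, hr, hr'⟩
    · obtain ⟨i, j, k, h1, h2, h3, h4, h5, h6⟩ := ih h'
      exact ⟨i + 1, j + 1, k + 1, by omega, by omega, by simpa using h3,
        by simpa using h4, by simpa using h5, by simpa using h6⟩
    · obtain ⟨rfl, rfl⟩ : a = x ∧ r = [y, z] := by
        constructor <;> injection hr with h1 h2 <;> simp [h1, h2]
      obtain ⟨i, j, h1, h2, h3, h4⟩ := idx_of_sub2 hr'
      exact ⟨0, i + 1, j + 1, by omega, by omega, by simpa using h2, rfl,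
        by simpa using h3, by simpa using h4⟩

lemma avoids312_iff {w : List ℕ} : Avoids312 w ↔ ¬ Has312 w := by
  unfold Avoids312 Has312
  constructor
  · intro h ⟨x, y, z, hs, h1, h2⟩
    obtain ⟨i, j, k, hij, hjk, hk, e1, e2, e3⟩ := idx_of_sub3 hs
    exact h ⟨i, j, k, hij, hjk, hk, by rw [e1, e2, e3]; exact ⟨h1, h2⟩⟩
  · intro h ⟨i, j, k, hij, hjk, hk, h1, h2⟩
    exact h ⟨w.getD i 0, w.getD j 0, w.getD k 0, sub_of_idx3 hij hjk hk, h1, h2⟩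

/- ### complement lemmas -/

lemma cmpl_cmpl {n : ℕ} {w : List ℕ} (h : ∀ x ∈ w, 1 ≤ x ∧ x ≤ n) :
    cmpl n (cmpl n w) = w := by
  induction w with
  | nil => rfl
  | cons a t ih =>
    have ha := h a (by simp)
    have ht := fun x hx => h x (mem_cons_of_mem _ hx)
    simp only [cmpl, map_cons] at *
    rw [show n + 1 - (n + 1 - a) = a by omega]
    exact congrArg _ (ih ht)

lemma cmpl_bounds {n : ℕ} {w : List ℕ} (h : ∀ x ∈ w, 1 ≤ x ∧ x ≤ n) :
    ∀ x ∈ cmpl n w, 1 ≤ x ∧ x ≤ n := by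
  intro x hx
  obtain ⟨y, hy, rfl⟩ := mem_map.mp hx
  have := h y hy
  omega

lemma bounds_of_perm {n : ℕ} {w : List ℕ} (h : w.Perm (List.range' 1 n)) :
    ∀ x ∈ w, 1 ≤ x ∧ x ≤ n := by
  intro x hx
  have := h.mem_iff.mp hx
  rw [mem_range'_1] at this
  omega

lemma cmpl_perm {n : ℕ} {w : List ℕ} (h : w.Perm (List.range' 1 n)) :
    (cmpl n w).Perm (List.range' 1 n) := by
  have h1 : (cmpl n w).Perm (cmpl n (List.range' 1 n)) := h.map _
  have h2 : cmpl n (List.range' 1 n) = (List.range' 1 n).reverse := by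
    rw [reverse_range', range'_eq_map_range]
    unfold cmpl
    rw [map_map]
    apply map_congr_left
    intro i _
    simp only [Function.comp_apply]
    omega
  rw [h2] at h1
  exact h1.trans (reverse_perm _)

lemma has132_cmpl {n : ℕ} {w : List ℕ} (hb : ∀ x ∈ w, 1 ≤ x ∧ x ≤ n) :
    Has132 (cmpl n w) ↔ Has312 w := by
  constructor
  · rintro ⟨a, b, c, hs, h1, h2⟩
    have hsub : [n + 1 - a, n + 1 - b, n + 1 - c] <+ cmpl n (cmpl n w) := by
      simpa [cmpl] using hs.map (fun x => n + 1 - x)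
    rw [cmpl_cmpl hb] at hsub
    have hbnds := cmpl_bounds hb
    have ha' := hbnds a (hs.subset (by simp))
    have hb' := hbnds b (hs.subset (by simp))
    have hc' := hbnds c (hs.subset (by simp))
    exact ⟨n + 1 - a, n + 1 - b, n + 1 - c, hsub, by omega, by omega⟩
  · rintro ⟨x, y, z, hs, h1, h2⟩
    have hsub : [n + 1 - x, n + 1 - y, n + 1 - z] <+ cmpl n w := by
      simpa [cmpl] using hs.map (fun x => n + 1 - x)
    have hx' := hb x (hs.subset (by simp))
    have hy' := hb y (hs.subset (by simp))
    have hz' := hb z (hs.subset (by simp))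
    exact ⟨n + 1 - x, n + 1 - y, n + 1 - z, hsub, by omega, by omega⟩

lemma has312_cmpl {n : ℕ} {w : List ℕ} (hb : ∀ x ∈ w, 1 ≤ x ∧ x ≤ n) :
    Has312 (cmpl n w) ↔ Has132 w := by
  constructor
  · rintro ⟨a, b, c, hs, h1, h2⟩
    have hsub : [n + 1 - a, n + 1 - b, n + 1 - c] <+ cmpl n (cmpl n w) := by
      simpa [cmpl] using hs.map (fun x => n + 1 - x)
    rw [cmpl_cmpl hb] at hsub
    have hbnds := cmpl_bounds hb
    have ha' := hbnds a (hs.subset (by simp))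
    have hb' := hbnds b (hs.subset (by simp))
    have hc' := hbnds c (hs.subset (by simp))
    exact ⟨n + 1 - a, n + 1 - b, n + 1 - c, hsub, by omega, by omega⟩
  · rintro ⟨x, y, z, hs, h1, h2⟩
    have hsub : [n + 1 - x, n + 1 - y, n + 1 - z] <+ cmpl n w := by
      simpa [cmpl] using hs.map (fun x => n + 1 - x)
    have hx' := hb x (hs.subset (by simp))
    have hy' := hb y (hs.subset (by simp))
    have hz' := hb z (hs.subset (by simp))
    exact ⟨n + 1 - x, n + 1 - y, n + 1 - z, hsub, by omega, by omega⟩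

/- ### runDecomp lemmas -/

lemma runDecomp_spec (w : List ℕ) :
    (runDecomp w).flatten = w ∧ (∀ b ∈ runDecomp w, b ≠ [] ∧ b.Pairwise (· < ·)) := by
  induction w with
  | nil => exact ⟨rfl, by simp [runDecomp]⟩
  | cons x xs ih =>
    obtain ⟨ihf, ihb⟩ := ih
    have hru : runDecomp (x :: xs) = consRun x (runDecomp xs) := rfl
    rcases hm : runDecomp xs with _ | ⟨b1, rs⟩
    · rw [hm] at ihf
      simp only [flatten_nil] at ihf
      subst ihf
      rw [hru, hm]
      exact ⟨by simp [consRun], by simp [consRun]⟩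
    · rcases b1 with _ | ⟨y, r⟩
      · exact absurd rfl (ihb [] (by rw [hm]; simp)).1
      · rw [hm] at ihf ihb
        rw [hru, hm]
        by_cases hxy : x < y
        · refine ⟨?_, ?_⟩
          · simp only [consRun, if_pos hxy, flatten_cons]
            simp only [flatten_cons] at ihf
            simp [ihf]
          · intro b hb
            simp only [consRun, if_pos hxy, mem_cons] at hb
            rcases hb with rfl | hb
            · refine ⟨by simp, ?_⟩
              have hsy : (y :: r).Pairwise (· < ·) := (ihb _ (by simp)).2
              rw [pairwise_cons]
              refine ⟨?_, hsy⟩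
              intro z hz
              rcases mem_cons.mp hz with rfl | hz
              · exact hxy
              · exact lt_trans hxy ((pairwise_cons.mp hsy).1 z hz)
            · exact ihb b (mem_cons_of_mem _ hb)
        · refine ⟨?_, ?_⟩
          · simp only [consRun, if_neg hxy, flatten_cons]
            simp only [flatten_cons] at ihf
            simp [ihf]
          · intro b hb
            simp only [consRun, if_neg hxy, mem_cons] at hb
            rcases hb with rfl | rfl | hb
            · exact ⟨by simp, by simp⟩
            · exact ihb _ (by simp)
            · exact ihb b (mem_cons_of_mem _ hb)

lemma runDecomp_chain {w : List ℕ} (hnd : w.Nodup) :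
    (runDecomp w).Chain' (fun b b' => ∃ x ∈ b, ∃ y ∈ b', y < x) := by
  induction w with
  | nil => simp [runDecomp, List.Chain']
  | cons x xs ih =>
    have hnd' : xs.Nodup := (nodup_cons.mp hnd).2
    have hx : x ∉ xs := (nodup_cons.mp hnd).1
    have ihc := ih hnd'
    have hru : runDecomp (x :: xs) = consRun x (runDecomp xs) := rfl
    rcases hm : runDecomp xs with _ | ⟨b1, rs⟩
    · rw [hru, hm]; simp [consRun, List.Chain']
    · rcases b1 with _ | ⟨y, r⟩
      · exact absurd rfl ((runDecomp_spec xs).2 [] (by rw [hm]; simp)).1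
      · rw [hm] at ihc
        rw [hru, hm]
        have hyxs : y ∈ xs := by
          rw [← (runDecomp_spec xs).1, hm]
          simp
        by_cases hxy : x < y
        · simp only [consRun, if_pos hxy]
          simp only [Chain'] at ihc ⊢; rw [isChain_cons] at ihc ⊢
          refine ⟨?_, ihc.2⟩
          intro b hb
          obtain ⟨x', hx', y', hy', hlt⟩ := ihc.1 b hb
          exact ⟨x', mem_cons_of_mem _ hx', y', hy', hlt⟩
        · simp only [consRun, if_neg hxy]
          simp only [Chain']; rw [isChain_cons_cons]
          refine ⟨?_, ihc⟩
          have : y ≠ x := fun h => hx (h ▸ hyxs)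
          exact ⟨x, by simp, y, by simp, by omega⟩

lemma runDecomp_head (z : ℕ) (w' : List ℕ) :
    ∃ r rs, runDecomp (z :: w') = (z :: r) :: rs := by
  have hru : runDecomp (z :: w') = consRun z (runDecomp w') := rfl
  rw [hru]
  rcases runDecomp w' with _ | ⟨b1, rs⟩
  · exact ⟨[], [], rfl⟩
  · rcases b1 with _ | ⟨y, r⟩
    · exact ⟨[], [], rfl⟩
    · by_cases hzy : z < y
      · exact ⟨y :: r, rs, by simp [consRun, if_pos hzy]⟩
      · exact ⟨[], (y :: r) :: rs, by simp [consRun, if_neg hzy]⟩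

lemma runDecomp_append (b w : List ℕ) (hb : b ≠ []) (hs : b.Pairwise (· < ·))
    (hd : ∀ z, w.head? = some z → ∃ x ∈ b, z < x) :
    runDecomp (b ++ w) = b :: runDecomp w := by
  induction b with
  | nil => exact absurd rfl hb
  | cons x b' ih =>
    rcases b' with _ | ⟨x', b''⟩
    · rcases w with _ | ⟨z, w'⟩
      · simp [runDecomp, consRun]
      · obtain ⟨r, rs, hr⟩ := runDecomp_head z w'
        obtain ⟨x1, hx1, hzx1⟩ := hd z rfl
        have hxx : x1 = x := by simpa using hx1
        rw [hxx] at hzx1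
        have hru : runDecomp ([x] ++ z :: w') = consRun x (runDecomp (z :: w')) := rfl
        rw [hru, hr]
        simp [consRun, if_neg (by omega : ¬ x < z)]
    · have hs' : (x' :: b'').Pairwise (· < ·) := (pairwise_cons.mp hs).2
      have hxx' : x < x' := (pairwise_cons.mp hs).1 x' (by simp)
      have hd' : ∀ z, w.head? = some z → ∃ u ∈ x' :: b'', z < u := by
        intro z hz
        obtain ⟨u, hu, hzu⟩ := hd z hz
        rcases mem_cons.mp hu with rfl | hu
        · exact ⟨x', by simp, by omega⟩
        · exact ⟨u, hu, hzu⟩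
      have ihe := ih (by simp) hs' hd'
      have hru : runDecomp ((x :: x' :: b'') ++ w) =
          consRun x (runDecomp ((x' :: b'') ++ w)) := rfl
      rw [hru, ihe]
      simp [consRun, if_pos hxx']

lemma runDecomp_flatten (π : List (List ℕ))
    (hb : ∀ b ∈ π, b ≠ [] ∧ b.Pairwise (· < ·))
    (hch : π.Chain' (fun b b' => ∃ x ∈ b, ∃ y ∈ b', y < x)) :
    runDecomp π.flatten = π := by
  induction π with
  | nil => rfl
  | cons b π' ih =>
    rw [flatten_cons]
    rw [runDecomp_append b π'.flatten (hb b (by simp)).1 (hb b (by simp)).2 ?_]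
    · rw [ih (fun b' hb' => hb b' (mem_cons_of_mem _ hb')) hch.tail]
    · intro z hz
      rcases π' with _ | ⟨b₁, π''⟩
      · simp at hz
      · have hb₁ := hb b₁ (by simp)
        obtain ⟨x0, hx0, y0, hy0, hlt⟩ := (isChain_cons.mp hch).1 b₁ (by simp)
        refine ⟨x0, hx0, ?_⟩
        rcases b₁ with _ | ⟨w₁, t₁⟩
        · exact absurd rfl hb₁.1
        · have hzw : z = w₁ := by
            rw [flatten_cons] at hz
            simp only [cons_append, head?_cons, Option.some.injEq] at hz
            exact hz.symm
          subst hzw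
          have hsorted := hb₁.2
          have : z ≤ y0 := by
            rcases mem_cons.mp hy0 with rfl | hy0'
            · exact le_refl _
            · exact le_of_lt ((pairwise_cons.mp hsorted).1 y0 hy0')
          omega

/- ### sorted/sublist helpers -/

lemma sub2_of_sorted {l : List ℕ} (hs : l.Pairwise (· < ·)) {a c : ℕ}
    (ha : a ∈ l) (hc : c ∈ l) (h : a < c) : [a, c] <+ l := by
  induction l with
  | nil => simp at ha
  | cons x t ih =>
    obtain ⟨hxall, hst⟩ := pairwise_cons.mp hs
    rcases mem_cons.mp ha with rfl | hat
    · have hct : c ∈ t := by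
        rcases mem_cons.mp hc with rfl | hct
        · omega
        · exact hct
      exact Sublist.cons₂ _ (singleton_sublist.mpr hct)
    · have hct : c ∈ t := by
        rcases mem_cons.mp hc with rfl | hct
        · exact absurd (hxall a hat) (by omega)
        · exact hct
      exact Sublist.cons _ (ih hst hat hct)

lemma block_mem {π : List (List ℕ)} {i : ℕ} (hi : i < π.length) : π.getD i [] ∈ π := by
  rw [getD_eq_getElem _ _ hi]
  exact getElem_mem _

lemma blocks_sub (π : List (List ℕ)) {i j : ℕ} (hij : i < j) (hj : j < π.length)
    {u v : List ℕ} (hu : u <+ π.getD i []) (hv : v <+ π.getD j []) :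
    u ++ v <+ π.flatten := by
  induction π generalizing i j with
  | nil => simp at hj
  | cons b π' ih =>
    rw [flatten_cons]
    match i with
    | 0 =>
      match j with
      | j' + 1 =>
        have hj' : j' < π'.length := by simpa using hj
        have hv' : v <+ π'.flatten :=
          hv.trans (sublist_flatten_of_mem (block_mem hj'))
        exact Sublist.append (by simpa using hu) hv'
    | i' + 1 =>
      match j with
      | j' + 1 =>
        have := ih (i := i') (j := j') (by omega) (by simpa using hj)
          (by simpa using hu) (by simpa using hv)
        exact this.trans (sublist_append_right _ _)

/- ### locating elements of sublists of flatten in blocks -/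

lemma loc1 {π : List (List ℕ)} {x : ℕ} (h : x ∈ π.flatten) :
    ∃ i, i < π.length ∧ x ∈ π.getD i [] := by
  obtain ⟨b, hb, hx⟩ := mem_flatten.mp h
  obtain ⟨n, hn, he⟩ := getElem_of_mem hb
  exact ⟨n, hn, by rw [getD_eq_getElem _ _ hn, he]; exact hx⟩

lemma loc2 {π : List (List ℕ)} {v w : ℕ} (h : [v, w] <+ π.flatten) :
    ∃ q r, q ≤ r ∧ r < π.length ∧ v ∈ π.getD q [] ∧ w ∈ π.getD r [] ∧
      (q = r → [v, w] <+ π.getD q []) := by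
  induction π with
  | nil => simp at h
  | cons b π' ih =>
    rw [flatten_cons] at h
    obtain ⟨s, t, hst, hsb, htf⟩ := sublist_append_iff.mp h
    match s, hst with
    | [], hst =>
      simp only [nil_append] at hst
      subst hst
      obtain ⟨q, r, h1, h2, h3, h4, h5⟩ := ih htf
      exact ⟨q + 1, r + 1, by omega, by simpa using h2, by simpa using h3,
        by simpa using h4, fun he => by simpa using h5 (by omega)⟩
    | [a], hst =>
      have hav : a = v ∧ t = [w] := by
        injection hst with h1 h2
        exact ⟨h1.symm, h2.symm⟩
      obtain ⟨rfl, rfl⟩ := hav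
      obtain ⟨r, hr, hwr⟩ := loc1 (π := π') (singleton_sublist.mp htf)
      exact ⟨0, r + 1, by omega, by simpa using hr, by simpa using hsb.subset (by simp),
        by simpa using hwr, by omega⟩
    | a :: a' :: s', hst =>
      have : a = v ∧ a' = w ∧ s' = [] ∧ t = [] := by
        injection hst with h1 h2
        injection h2 with h3 h4
        have := append_eq_nil_iff.mp h4.symm
        exact ⟨h1.symm, h3.symm, this.1, this.2⟩
      obtain ⟨rfl, rfl, rfl, rfl⟩ := this
      refine ⟨0, 0, le_refl _, by simp, ?_, ?_, fun _ => by simpa using hsb⟩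
      · simpa using hsb.subset (by simp)
      · simpa using hsb.subset (by simp)

lemma loc3 {π : List (List ℕ)} {u v w : ℕ} (h : [u, v, w] <+ π.flatten) :
    ∃ p q r, p ≤ q ∧ q ≤ r ∧ r < π.length ∧ u ∈ π.getD p [] ∧ v ∈ π.getD q [] ∧
      w ∈ π.getD r [] ∧ (q = r → [v, w] <+ π.getD q []) := by
  induction π with
  | nil => simp at h
  | cons b π' ih =>
    rw [flatten_cons] at h
    obtain ⟨s, t, hst, hsb, htf⟩ := sublist_append_iff.mp h
    match s, hst with
    | [], hst =>
      simp only [nil_append] at hst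
      subst hst
      obtain ⟨p, q, r, h1, h2, h3, h4, h5, h6, h7⟩ := ih htf
      exact ⟨p + 1, q + 1, r + 1, by omega, by omega, by simpa using h3,
        by simpa using h4, by simpa using h5, by simpa using h6,
        fun he => by simpa using h7 (by omega)⟩
    | [a], hst =>
      have hav : a = u ∧ t = [v, w] := by
        injection hst with h1 h2
        exact ⟨h1.symm, h2.symm⟩
      obtain ⟨rfl, rfl⟩ := hav
      obtain ⟨q, r, h1, h2, h3, h4, h5⟩ := loc2 (π := π') htf
      exact ⟨0, q + 1, r + 1, by omega, by omega, by simpa using h2,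
        by simpa using hsb.subset (by simp), by simpa using h3, by simpa using h4,
        fun he => by simpa using h5 (by omega)⟩
    | [a, a'], hst =>
      have : a = u ∧ a' = v ∧ t = [w] := by
        injection hst with h1 h2
        injection h2 with h3 h4
        exact ⟨h1.symm, h3.symm, h4.symm⟩
      obtain ⟨rfl, rfl, rfl⟩ := this
      obtain ⟨r, hr, hwr⟩ := loc1 (π := π') (singleton_sublist.mp htf)
      exact ⟨0, 0, r + 1, le_refl _, by omega, by simpa using hr,
        by simpa using hsb.subset (by simp), by simpa using hsb.subset (by simp),
        by simpa using hwr, by omega⟩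
    | a :: a' :: a'' :: s', hst =>
      have : a = u ∧ a' = v ∧ a'' = w ∧ s' = [] ∧ t = [] := by
        injection hst with h1 h2
        injection h2 with h3 h4
        injection h4 with h5 h6
        have := append_eq_nil_iff.mp h6.symm
        exact ⟨h1.symm, h3.symm, h5.symm, this.1, this.2⟩
      obtain ⟨rfl, rfl, rfl, rfl, rfl⟩ := this
      refine ⟨0, 0, 0, le_refl _, le_refl _, by simp, ?_, ?_, ?_, fun _ => ?_⟩
      · simpa using hsb.subset (by simp)
      · simpa using hsb.subset (by simp)
      · simpa using hsb.subset (by simp)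
      · simp only [getD_cons_zero]
        exact Sublist.trans (by simp) hsb

/- ### Has132 monotone -/

lemma has132_mono {v w : List ℕ} (hvw : v <+ w) (h : Has132 v) : Has132 w := by
  obtain ⟨x, y, z, hs, h1, h2⟩ := h
  exact ⟨x, y, z, hs.trans hvw, h1, h2⟩

/- ### Claim A : 132-avoidance implies canonical and non-crossing -/

lemma canonical_of_av132 (π : List (List ℕ))
    (hb : ∀ b ∈ π, b ≠ [] ∧ b.Pairwise (· < ·))
    (hch : π.Chain' (fun b b' => ∃ x ∈ b, ∃ y ∈ b', y < x))
    (hnd : π.flatten.Nodup)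
    (hav : ¬ Has132 π.flatten) : IsCanonicalPart π := by
  induction π with
  | nil => simp [IsCanonicalPart, List.Chain']
  | cons b π' ih =>
    unfold IsCanonicalPart
    simp only [Chain']; rw [isChain_cons]
    have hndtail : π'.flatten.Nodup := by
      rw [flatten_cons, nodup_append] at hnd
      exact hnd.2.1
    have hdisj : Disjoint b π'.flatten := by
      rw [flatten_cons, nodup_append] at hnd
      exact fun a ha hb' => hnd.2.2 a ha a hb' rfl
    refine ⟨?_, ih (fun b' h => hb b' (mem_cons_of_mem _ h)) hch.tail hndtail
      (fun h => hav (has132_mono (by rw [flatten_cons]; exact sublist_append_right _ _) h))⟩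
    intro b₁ hb₁
    rcases π' with _ | ⟨b', rest⟩
    · simp at hb₁
    ·
      simp only [head?_cons, Option.mem_some_iff] at hb₁
      subst hb₁
      obtain ⟨x0, hx0, y0, hy0, hlt⟩ := (isChain_cons.mp hch).1 b' (by simp)
      rcases b' with _ | ⟨hb'', tb'⟩
      · exact absurd rfl (hb [] (by simp)).1
      ·
        refine ⟨hb'', by simp, ?_⟩
        intro x hxb
        by_contra hcon
        push_neg at hcon
        have hsorted' : (hb'' :: tb').Pairwise (· < ·) := (hb (hb'' :: tb') (by simp)).2
        have hhy0 : hb'' ≤ y0 := by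
          rcases mem_cons.mp hy0 with rfl | hy0'
          · exact le_refl _
          · exact le_of_lt ((pairwise_cons.mp hsorted').1 y0 hy0')
        have hne : x ≠ hb'' := by
          intro h
          exact hdisj hxb (by rw [h, flatten_cons]; exact mem_append_left _ (by simp))
        have hxlt : x < hb'' := by omega
        -- x < hb'' ≤ y0 < x0, x, x0 ∈ b
        have hxx0 : x < x0 := by omega
        have hsub1 : [x, x0] <+ b := sub2_of_sorted (hb b (by simp)).2 hxb hx0 hxx0
        have hsub2 : [y0] <+ ((hb'' :: tb') :: rest).flatten := singleton_sublist.mpr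
          (mem_flatten.mpr ⟨hb'' :: tb', by simp, hy0⟩)
        have : [x, x0, y0] <+ (b :: (hb'' :: tb') :: rest).flatten := by
          rw [flatten_cons]
          exact Sublist.append hsub1 hsub2
        exact hav ⟨x, x0, y0, this, by omega, by omega⟩

lemma noncrossing_of_av132 (π : List (List ℕ))
    (hb : ∀ b ∈ π, b ≠ [] ∧ b.Pairwise (· < ·))
    (hav : ¬ Has132 π.flatten) : IsNonCrossing π := by
  intro a b c d hab hbc hcd i j hi hj hij ⟨ha, hc, hbm, hd⟩
  rcases Nat.lt_or_ge i j with h | h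
  · have hsi : (π.getD i []).Pairwise (· < ·) := (hb _ (block_mem hi)).2
    have hsub : [a, c] ++ [b] <+ π.flatten :=
      blocks_sub π h hj (sub2_of_sorted hsi ha hc (by omega)) (singleton_sublist.mpr hbm)
    exact hav ⟨a, c, b, hsub, hab, hbc⟩
  · have hji : j < i := by omega
    have hsj : (π.getD j []).Pairwise (· < ·) := (hb _ (block_mem hj)).2
    have hsub : [b, d] ++ [c] <+ π.flatten :=
      blocks_sub π hji hi (sub2_of_sorted hsj hbm hd (by omega)) (singleton_sublist.mpr hc)
    exact hav ⟨b, d, c, hsub, hbc, hcd⟩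

/- ### Claim B : canonical + non-crossing implies 132-avoidance -/

lemma av132_of_nc (π : List (List ℕ))
    (hb : ∀ b ∈ π, b ≠ [] ∧ b.Pairwise (· < ·))
    (hcan : IsCanonicalPart π)
    (hnc : IsNonCrossing π) : ¬ Has132 π.flatten := by
  rintro ⟨u, v, w, hs, huw, hwv⟩
  obtain ⟨p, q, r, hpq, hqr, hr, hu, hv, hw, hclause⟩ := loc3 hs
  have hq : q < π.length := by omega
  have hp : p < π.length := by omega
  -- q ≠ r
  have hqr' : q < r := by
    rcases Nat.lt_or_ge q r with h | h
    · exact h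
    · exfalso
      have he : q = r := by omega
      have := hclause he
      have hsor : (π.getD q []).Pairwise (· < ·) := (hb _ (block_mem hq)).2
      have : ([v, w] : List ℕ).Pairwise (· < ·) := hsor.sublist this
      rw [pairwise_cons] at this
      have := this.1 w (by simp)
      omega
  -- pairwise of canonical chain
  haveI : IsTrans (List ℕ) (fun b b' => ∃ y ∈ b', ∀ x ∈ b, y < x) := by
    constructor
    rintro A B C ⟨y, hy, hylt⟩ ⟨z, hz, hzlt⟩
    exact ⟨z, hz, fun x hx => lt_trans (hzlt y hy) (hylt x hx)⟩
  have hpw := isChain_iff_pairwise.mp hcan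
  have hpair : ∀ {i j : ℕ} (hi : i < π.length) (hj : j < π.length), i < j →
      ∃ y ∈ π.getD j [], ∀ x ∈ π.getD i [], y < x := by
    intro i j hi hj hij
    have := pairwise_iff_getElem.mp hpw i j hi hj hij
    rwa [getD_eq_getElem _ _ hi, getD_eq_getElem _ _ hj]
  rcases Nat.lt_or_ge p q with hplt | hpge
  · -- p < q < r
    obtain ⟨yq, hyq, hyqlt⟩ := hpair hp hq hplt
    obtain ⟨yr, hyr, hyrlt⟩ := hpair hq hr hqr'
    exact hnc yr yq w v (hyrlt yq hyq) (lt_trans (hyqlt u hu) huw) hwv r q hr hq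
      (by omega) ⟨hyr, hw, hyq, hv⟩
  · -- p = q < r
    have hpe : p = q := by omega
    subst hpe
    obtain ⟨y, hy, hylt⟩ := hpair hp hr hqr'
    exact hnc y u w v (hylt u hu) huw hwv r p hr hp (by omega) ⟨hy, hw, hu, hv⟩

/- ### the map -/

def F (n : ℕ) (π : List (List ℕ)) : List (List ℕ) := runDecomp (cmpl n π.flatten)

lemma F_flatten (n : ℕ) (π : List (List ℕ)) : (F n π).flatten = cmpl n π.flatten :=
  (runDecomp_spec _).1

lemma F_nccp {n : ℕ} {π : List (List ℕ)} (h : IsNCCP n π) : IsNCCP n (F n π) := by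
  obtain ⟨hperm, _, _⟩ := h
  have hcperm := cmpl_perm hperm
  refine ⟨by rw [F_flatten]; exact hcperm, (runDecomp_spec _).2, ?_⟩
  exact runDecomp_chain (hcperm.nodup_iff.mpr (nodup_range' (s := 1) (n := n)))

lemma F_F {n : ℕ} {π : List (List ℕ)} (h : IsNCCP n π) : F n (F n π) = π := by
  obtain ⟨hperm, hbl, hch⟩ := h
  have hbounds := bounds_of_perm hperm
  rw [F, F_flatten, cmpl_cmpl hbounds]
  exact runDecomp_flatten π hbl hch

end NCCPAux

open NCCPAux List in
/-- There is a bijection between `NCCP(n;312)` and `NCP(n)`. -/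
theorem nccp312_equiv_ncp (n : ℕ) :
    Nonempty
      ({π : List (List ℕ) // IsNCCP n π ∧ Avoids312 π.flatten} ≃
       {π : List (List ℕ) // IsNCCP n π ∧ IsNonCrossing π ∧ IsCanonicalPart π}) := by
  constructor
  refine
    { toFun := fun p => ⟨F n p.1, ?_⟩
      invFun := fun p => ⟨F n p.1, ?_⟩
      left_inv := fun p => Subtype.ext (F_F p.2.1)
      right_inv := fun p => Subtype.ext (F_F p.2.1) }
  · -- forward: LHS to RHS
    obtain ⟨π, h1, h2⟩ := p
    have hbounds := bounds_of_perm h1.1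
    have hnccp := F_nccp h1
    obtain ⟨hp', hbl', hch'⟩ := F_nccp h1
    have hav : ¬ Has132 (cmpl n π.flatten) := by
      rw [has132_cmpl hbounds]
      exact avoids312_iff.mp h2
    have hav' : ¬ Has132 (F n π).flatten := by rw [F_flatten]; exact hav
    refine ⟨hnccp, noncrossing_of_av132 _ hbl' hav',
      canonical_of_av132 _ hbl' hch' ?_ hav'⟩
    exact ((F_flatten n π) ▸ (cmpl_perm h1.1)).nodup_iff.mpr (nodup_range' (s := 1) (n := n))
  · -- backward: RHS to LHS
    obtain ⟨π, h1, hnc, hcan⟩ := p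
    have hbounds := bounds_of_perm h1.1
    refine ⟨F_nccp h1, ?_⟩
    obtain ⟨hp1, hbl1, hch1⟩ := h1
    rw [avoids312_iff, F_flatten, has312_cmpl hbounds]
    exact av132_of_nc π hbl1 hcan hnc
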